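/- Let G be a connected simple graph on n vertices with a vertex weight ω. Then equality LE_ω(G) = n·MD_ω(G) + E(G) holds if and only if G is ω-regular, i.e., ω is constant on the vertices of G. -/

import Mathlib

open scoped BigOperators
open Matrix Finset

namespace WLEaux

variable {n : ℕ}

/-- identity coercion into Euclidean space -/
def toE (x : Fin n → ℝ) : EuclideanSpace ℝ (Fin n) := WithLp.toLp 2 x

@[simp] lemma toE_apply (x : Fin n → ℝ) (i : Fin n) : toE x i = x i := rfl

lemma inner_eq_sum (x y : EuclideanSpace ℝ (Fin n)) : (inner ℝ x y : ℝ) = ∑ i, x i * y i := by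
  simp [PiLp.inner_apply, RCLike.inner_apply]
  exact Finset.sum_congr rfl fun i _ => mul_comm _ _

lemma toE_smul (a : ℝ) (x : Fin n → ℝ) : toE (a • x) = a • toE x := rfl

lemma sym (M : Matrix (Fin n) (Fin n) ℝ) (hM : M.IsHermitian)
    (x y : EuclideanSpace ℝ (Fin n)) :
    (inner ℝ (toE (M *ᵥ x)) y : ℝ) = inner ℝ x (toE (M *ᵥ y)) := by
  rw [inner_eq_sum, inner_eq_sum]
  simp only [toE_apply, Matrix.mulVec, dotProduct, Finset.mul_sum, Finset.sum_mul]
  rw [Finset.sum_comm]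
  refine Finset.sum_congr rfl fun i _ => Finset.sum_congr rfl fun j _ => ?_
  have h : M j i = M i j := by
    conv_lhs => rw [← hM]
    simp [Matrix.conjTranspose_apply]
  rw [h]; ring

lemma eig_orth (M : Matrix (Fin n) (Fin n) ℝ) (hM : M.IsHermitian)
    {x y : EuclideanSpace ℝ (Fin n)} {a b : ℝ}
    (hx : toE (M *ᵥ x) = a • x) (hy : toE (M *ᵥ y) = b • y) (hab : a ≠ b) :
    (inner ℝ x y : ℝ) = 0 := by
  have h1 : a * (inner ℝ x y : ℝ) = b * (inner ℝ x y : ℝ) := by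
    calc a * (inner ℝ x y : ℝ) = (inner ℝ (a • x) y : ℝ) := (real_inner_smul_left x y a).symm
      _ = (inner ℝ (toE (M *ᵥ x)) y : ℝ) := by rw [hx]
      _ = (inner ℝ x (toE (M *ᵥ y)) : ℝ) := sym M hM x y
      _ = (inner ℝ x (b • y) : ℝ) := by rw [hy]
      _ = b * (inner ℝ x y : ℝ) := real_inner_smul_right x y b
  have h2 : (a - b) * (inner ℝ x y : ℝ) = 0 := by linarith
  rcases mul_eq_zero.mp h2 with h | h
  · exact absurd (sub_eq_zero.mp h) hab
  · exact h

/-- quadratic form expansion in an eigenbasis -/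
lemma qf_expand (M : Matrix (Fin n) (Fin n) ℝ) (hM : M.IsHermitian)
    (b : OrthonormalBasis (Fin n) ℝ (EuclideanSpace ℝ (Fin n))) (η : Fin n → ℝ)
    (hb : ∀ l, toE (M *ᵥ (b l)) = η l • b l) (x : EuclideanSpace ℝ (Fin n)) :
    (inner ℝ x (toE (M *ᵥ x)) : ℝ) = ∑ l, η l * (inner ℝ (b l) x : ℝ) ^ 2 := by
  rw [← b.sum_inner_mul_inner x (toE (M *ᵥ x))]
  refine Finset.sum_congr rfl fun l _ => ?_
  have h : (inner ℝ (b l) (toE (M *ᵥ x)) : ℝ) = η l * (inner ℝ (b l) x : ℝ) := by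
    calc (inner ℝ (b l) (toE (M *ᵥ x)) : ℝ) = (inner ℝ (toE (M *ᵥ (b l))) x : ℝ) :=
          (sym M hM (b l) x).symm
      _ = (inner ℝ (η l • b l : EuclideanSpace ℝ (Fin n)) x : ℝ) := by rw [hb l]
      _ = η l * (inner ℝ (b l) x : ℝ) := real_inner_smul_left _ _ _
  rw [h, real_inner_comm x (b l)]; ring

/-- rows of an orthonormal basis have unit square sums -/
lemma sq_row_sum (b : OrthonormalBasis (Fin n) ℝ (EuclideanSpace ℝ (Fin n))) (j : Fin n) :
    ∑ k, (b k j) ^ 2 = 1 := by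
  have h := b.sum_inner_mul_inner (EuclideanSpace.single j (1:ℝ))
      (EuclideanSpace.single j (1:ℝ))
  simp only [EuclideanSpace.inner_single_left, EuclideanSpace.inner_single_right,
    starRingEnd_apply, star_trivial, one_mul, mul_one] at h
  calc ∑ k, (b k j) ^ 2 = ∑ k, (b k j) * (b k j) := by
        refine Finset.sum_congr rfl fun k _ => sq (b k j)
    _ = 1 := by rw [h]; simp [EuclideanSpace.inner_single_left]

/-- Parseval: coefficients of a unit vector square-sum to 1 -/
lemma sq_coeff_sum (b : OrthonormalBasis (Fin n) ℝ (EuclideanSpace ℝ (Fin n)))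
    (x : EuclideanSpace ℝ (Fin n)) (hx : (inner ℝ x x : ℝ) = 1) :
    ∑ k, (inner ℝ x (b k) : ℝ) ^ 2 = 1 := by
  have h := b.sum_inner_mul_inner x x
  rw [hx] at h
  rw [← h]
  refine Finset.sum_congr rfl fun k _ => ?_
  rw [real_inner_comm (b k) x]; ring

lemma basis_self_inner (b : OrthonormalBasis (Fin n) ℝ (EuclideanSpace ℝ (Fin n))) (k : Fin n) :
    (inner ℝ (b k) (b k) : ℝ) = 1 := by
  have := orthonormal_iff_ite.mp b.orthonormal k k
  simpa using this

lemma sq_coeff_sum' (b : OrthonormalBasis (Fin n) ℝ (EuclideanSpace ℝ (Fin n)))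
    (x : EuclideanSpace ℝ (Fin n)) :
    ∑ l, (inner ℝ (b l) x : ℝ) ^ 2 = (inner ℝ x x : ℝ) := by
  rw [← b.sum_inner_mul_inner x x]
  refine Finset.sum_congr rfl fun l _ => ?_
  rw [real_inner_comm (b l) x]; ring

/-- two eigensystems of the same symmetric matrix give equal sums of `f` of eigenvalues -/
lemma pair_sum (M : Matrix (Fin n) (Fin n) ℝ) (hM : M.IsHermitian)
    (b₁ b₂ : OrthonormalBasis (Fin n) ℝ (EuclideanSpace ℝ (Fin n))) (ζ η : Fin n → ℝ)
    (h₁ : ∀ k, toE (M *ᵥ (b₁ k)) = ζ k • b₁ k)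
    (h₂ : ∀ l, toE (M *ᵥ (b₂ l)) = η l • b₂ l)
    (f : ℝ → ℝ) : ∑ k, f (ζ k) = ∑ l, f (η l) := by
  have key : ∀ k l, f (ζ k) * ((inner ℝ (b₁ k) (b₂ l) : ℝ) * (inner ℝ (b₂ l) (b₁ k) : ℝ))
      = f (η l) * ((inner ℝ (b₁ k) (b₂ l) : ℝ) * (inner ℝ (b₂ l) (b₁ k) : ℝ)) := by
    intro k l
    rcases eq_or_ne ((inner ℝ (b₁ k) (b₂ l) : ℝ)) 0 with h | h
    · rw [h]; ring
    · have hz : ζ k = η l := by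
        by_contra hne
        exact h (eig_orth M hM (h₁ k) (h₂ l) hne)
      rw [hz]
  calc ∑ k, f (ζ k)
      = ∑ k, f (ζ k) * ∑ l, (inner ℝ (b₁ k) (b₂ l) : ℝ) * (inner ℝ (b₂ l) (b₁ k) : ℝ) := by
        refine Finset.sum_congr rfl fun k _ => ?_
        rw [b₂.sum_inner_mul_inner (b₁ k) (b₁ k), basis_self_inner, mul_one]
    _ = ∑ k, ∑ l, f (η l) * ((inner ℝ (b₁ k) (b₂ l) : ℝ) * (inner ℝ (b₂ l) (b₁ k) : ℝ)) := by
        refine Finset.sum_congr rfl fun k _ => ?_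
        rw [Finset.mul_sum]
        exact Finset.sum_congr rfl fun l _ => key k l
    _ = ∑ l, f (η l) * ∑ k, (inner ℝ (b₂ l) (b₁ k) : ℝ) * (inner ℝ (b₁ k) (b₂ l) : ℝ) := by
        rw [Finset.sum_comm]
        refine Finset.sum_congr rfl fun l _ => ?_
        rw [Finset.mul_sum]
        exact Finset.sum_congr rfl fun k _ => by ring
    _ = ∑ l, f (η l) := by
        refine Finset.sum_congr rfl fun l _ => ?_
        rw [b₁.sum_inner_mul_inner (b₂ l) (b₂ l), basis_self_inner, mul_one]

lemma perron (G : SimpleGraph (Fin n)) [DecidableRel G.Adj] (hconn : G.Connected)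
    (hA : (G.adjMatrix ℝ).IsHermitian) (a b : Fin n) (hab : G.Adj a b) :
    ∃ ρ : ℝ, 0 < ρ ∧ ∃ u : EuclideanSpace ℝ (Fin n),
      (∀ i, 0 < u i) ∧ toE (G.adjMatrix ℝ *ᵥ u) = ρ • u := by
  classical
  have hne : Nonempty (Fin n) := ⟨a⟩
  set A := G.adjMatrix ℝ with hAdef
  set w := hA.eigenvectorBasis with hwdef
  set lam := hA.eigenvalues with hlamdef
  have hw : ∀ l, toE (A *ᵥ (w l)) = lam l • w l := fun l =>
    congrArg toE (hA.mulVec_eigenvectorBasis l)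
  -- A has nonnegative entries
  have hAnn : ∀ i j, 0 ≤ A i j := by
    intro i j; rw [hAdef, SimpleGraph.adjMatrix_apply]; positivity
  obtain ⟨m, -, hm⟩ := Finset.exists_max_image Finset.univ lam ⟨a, Finset.mem_univ a⟩
  set ρ := lam m with hρdef
  have hm' : ∀ l, lam l ≤ ρ := fun l => hm l (Finset.mem_univ l)
  -- Rayleigh upper bound
  have hray : ∀ x : EuclideanSpace ℝ (Fin n),
      (inner ℝ x (toE (A *ᵥ x)) : ℝ) ≤ ρ * (inner ℝ x x : ℝ) := by
    intro x
    rw [qf_expand A hA w lam hw x, ← sq_coeff_sum' w x, Finset.mul_sum]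
    exact Finset.sum_le_sum fun l _ =>
      mul_le_mul_of_nonneg_right (hm' l) (sq_nonneg _)
  -- positivity of ρ via the edge
  have hρ : 0 < ρ := by
    have hab' : a ≠ b := G.ne_of_adj hab
    set f : Fin n → ℝ := fun i => (if i = a then (1:ℝ) else 0) + (if i = b then 1 else 0)
      with hfdef
    have hAf : ∀ i, (A *ᵥ f) i = A i a + A i b := by
      intro i
      simp [hfdef, Matrix.mulVec, dotProduct, mul_add, mul_ite, mul_one, mul_zero,
        Finset.sum_add_distrib, Finset.sum_ite_eq']
    have hAf2 : ∀ i, (A *ᵥ (toE f)) i = A i a + A i b := hAf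
    have hx1 : (inner ℝ (toE f) (toE (A *ᵥ (toE f))) : ℝ) = 2 := by
      rw [inner_eq_sum]
      simp only [toE_apply]
      calc ∑ i, f i * (A *ᵥ (toE f)) i = ∑ i, f i * (A i a + A i b) := by
            exact Finset.sum_congr rfl fun i _ => by rw [hAf2 i]
        _ = (A a a + A a b) + (A b a + A b b) := by
            simp [hfdef, add_mul, ite_mul, one_mul, zero_mul, Finset.sum_add_distrib,
              Finset.sum_ite_eq']
        _ = 2 := by
            rw [hAdef]
            norm_num [SimpleGraph.adjMatrix_apply, hab, hab.symm]
    have hx2 : (inner ℝ (toE f) (toE f) : ℝ) = 2 := by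
      rw [inner_eq_sum]
      simp only [toE_apply]
      simp [hfdef, add_mul, mul_add, ite_mul, mul_ite, one_mul, zero_mul, mul_one, mul_zero,
        Finset.sum_add_distrib, Finset.sum_ite_eq', hab', hab'.symm]
      norm_num
    have := hray (toE f)
    rw [hx1, hx2] at this
    linarith
  -- the candidate Perron vector
  set u : EuclideanSpace ℝ (Fin n) := toE (fun i => |w m i|) with hudef
  have hu_abs : ∀ i, u i = |w m i| := fun i => rfl
  have hnormu : (inner ℝ u u : ℝ) = 1 := by
    rw [inner_eq_sum]
    have : ∀ i, u i * u i = w m i * w m i := fun i => by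
      rw [hu_abs i, abs_mul_abs_self]
    rw [Finset.sum_congr rfl fun i _ => this i]
    rw [← inner_eq_sum, basis_self_inner]
  have hlow : ρ ≤ (inner ℝ u (toE (A *ᵥ u)) : ℝ) := by
    have h1 : (inner ℝ (w m) (toE (A *ᵥ (w m))) : ℝ) = ρ := by
      rw [hw m, real_inner_smul_right, basis_self_inner, mul_one]
    rw [← h1, inner_eq_sum, inner_eq_sum]
    simp only [toE_apply]
    have expand : ∀ (x : EuclideanSpace ℝ (Fin n)),
        ∑ i, x i * (A *ᵥ x) i = ∑ i, ∑ j, x i * (A i j * x j) := by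
      intro x
      refine Finset.sum_congr rfl fun i _ => ?_
      rw [show (A *ᵥ (x : Fin n → ℝ)) i = ∑ j, A i j * x j from rfl, Finset.mul_sum]
    rw [expand (w m), expand u]
    refine Finset.sum_le_sum fun i _ => Finset.sum_le_sum fun j _ => ?_
    rw [hu_abs i, hu_abs j]
    calc w m i * (A i j * w m j) = A i j * (w m i * w m j) := by ring
      _ ≤ A i j * |w m i * w m j| :=
          mul_le_mul_of_nonneg_left (le_abs_self _) (hAnn i j)
      _ = |w m i| * (A i j * |w m j|) := by rw [abs_mul]; ring
  have heq : (inner ℝ u (toE (A *ᵥ u)) : ℝ) = ρ := by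
    have h2 := hray u
    rw [hnormu, mul_one] at h2
    linarith
  -- eigenvector equation
  have hvanish : ∀ l, lam l ≠ ρ → (inner ℝ (w l) u : ℝ) = 0 := by
    intro l hl
    have h3 : ∑ l, (ρ - lam l) * (inner ℝ (w l) u : ℝ) ^ 2 = 0 := by
      have e1 : ∑ l, lam l * (inner ℝ (w l) u : ℝ) ^ 2 = ρ := by
        rw [← qf_expand A hA w lam hw u, heq]
      have e2 : ∑ l, (inner ℝ (w l) u : ℝ) ^ 2 = 1 := by
        rw [sq_coeff_sum' w u, hnormu]
      calc ∑ l, (ρ - lam l) * (inner ℝ (w l) u : ℝ) ^ 2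
          = ρ * ∑ l, (inner ℝ (w l) u : ℝ) ^ 2 - ∑ l, lam l * (inner ℝ (w l) u : ℝ) ^ 2 := by
            rw [Finset.mul_sum, ← Finset.sum_sub_distrib]
            exact Finset.sum_congr rfl fun l _ => by ring
        _ = 0 := by rw [e1, e2]; ring
    have h4 := (Finset.sum_eq_zero_iff_of_nonneg (fun l _ =>
      mul_nonneg (by linarith [hm' l] : (0:ℝ) ≤ ρ - lam l) (sq_nonneg _))).mp h3 l
      (Finset.mem_univ l)
    rcases mul_eq_zero.mp h4 with h | h
    · exact absurd (by linarith [sub_eq_zero.mp h] : lam l = ρ) hl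
    · exact pow_eq_zero_iff (by norm_num) |>.mp h
  have hrep : ∑ l, (inner ℝ (w l) u : ℝ) • w l = u := by
    have := w.sum_repr u
    simp_rw [w.repr_apply_apply] at this
    exact this
  have hAu : toE (A *ᵥ u) = ρ • u := by
    have hlin : toE (A *ᵥ u) = ∑ l, (inner ℝ (w l) u : ℝ) • toE (A *ᵥ (w l)) := by
      conv_lhs => rw [← hrep]
      rw [WithLp.ofLp_sum]; simp only [WithLp.ofLp_smul]
      show toE (A.mulVecLin (∑ l, (inner ℝ (w l) u : ℝ) • (w l).ofLp)) = _
      rw [map_sum]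
      simp only [_root_.map_smul, Matrix.mulVecLin_apply]
      simp only [toE, WithLp.toLp_sum, WithLp.toLp_smul]
    rw [hlin]
    have : ∀ l, (inner ℝ (w l) u : ℝ) • toE (A *ᵥ (w l)) = ρ • ((inner ℝ (w l) u : ℝ) • w l) := by
      intro l
      rw [hw l]
      rcases eq_or_ne (lam l) ρ with h | h
      · rw [h, smul_comm]
      · rw [hvanish l h]; simp
    rw [Finset.sum_congr rfl fun l _ => this l, ← Finset.smul_sum, hrep]
  -- positivity
  have hnn : ∀ i, 0 ≤ u i := fun i => by rw [hu_abs i]; exact abs_nonneg _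
  have hAuapp : ∀ i, ∑ j, A i j * u j = ρ * u i := by
    intro i
    have := congrFun (congrArg (fun z : EuclideanSpace ℝ (Fin n) => (z : Fin n → ℝ)) hAu) i
    simpa [Matrix.mulVec, dotProduct] using this
  have hzero : ∀ i j, G.Adj i j → u i = 0 → u j = 0 := by
    intro i j hij hui
    have h5 : ∑ j, A i j * u j = 0 := by rw [hAuapp i, hui, mul_zero]
    have h6 := (Finset.sum_eq_zero_iff_of_nonneg (fun j _ =>
      mul_nonneg (hAnn i j) (hnn j))).mp h5 j (Finset.mem_univ j)
    have h7 : A i j = 1 := by rw [hAdef]; simp [SimpleGraph.adjMatrix_apply, hij]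
    rw [h7, one_mul] at h6
    exact h6
  have hreach : ∀ i j, G.Reachable i j → u i = 0 → u j = 0 := by
    intro i j hij
    obtain ⟨p⟩ := hij
    induction p with
    | nil => exact id
    | cons h p ih => exact fun h0 => ih (hzero _ _ h h0)
  have hex : ∃ i, u i ≠ 0 := by
    by_contra h
    push_neg at h
    rw [inner_eq_sum] at hnormu
    have : ∑ i, u i * u i = 0 := Finset.sum_eq_zero fun i _ => by rw [h i, mul_zero]
    rw [this] at hnormu
    norm_num at hnormu
  obtain ⟨i₀, hi₀⟩ := hex
  refine ⟨ρ, hρ, u, fun i => ?_, hAu⟩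
  rcases eq_or_lt_of_le (hnn i) with h | h
  · exact absurd (hreach i i₀ (hconn i i₀) h.symm) hi₀
  · exact h

end WLEaux

open WLEaux Matrix Finset

/-- For a connected graph `G` on `n` vertices with vertex weight `ω`,
equality `LE_ω(G) = n · MD_ω(G) + E(G)` holds if and only if `G` is `ω`-regular. -/
theorem weighted_laplacian_energy_eq_iff_regular
    (n : ℕ) (hn : 0 < n) (G : SimpleGraph (Fin n)) [DecidableRel G.Adj]
    (hconn : G.Connected)
    (ω : Fin n → ℝ) (hω : ∀ i, 0 < ω i)
    (hL : (Matrix.diagonal ω - G.adjMatrix ℝ).IsHermitian)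
    (hA : (G.adjMatrix ℝ).IsHermitian) :
    (∑ i, |hL.eigenvalues i - (∑ j, ω j) / n| =
        (n : ℝ) * ((1 / (n : ℝ)) * ∑ i, |ω i - (∑ j, ω j) / n|) +
          ∑ i, |hA.eigenvalues i|) ↔
      (∀ u v : Fin n, ω u = ω v) := by
  classical
  have hn' : (n:ℝ) ≠ 0 := Nat.cast_ne_zero.mpr hn.ne'
  constructor
  · -- forward direction
    intro hEq
    by_contra hnc
    push_neg at hnc
    obtain ⟨u₀, v₀, hne0⟩ := hnc
    set c : ℝ := (∑ j, ω j) / n with hcdef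
    have hRHS : (n : ℝ) * ((1 / (n : ℝ)) * ∑ i, |ω i - c|) = ∑ i, |ω i - c| := by
      field_simp
    rw [hRHS] at hEq
    set A := G.adjMatrix ℝ with hAdef
    set v := hL.eigenvectorBasis with hvdef
    set w := hA.eigenvectorBasis with hwdef
    set μ := hL.eigenvalues with hμdef
    set lam := hA.eigenvalues with hlamdef
    have hLv : ∀ k, toE ((Matrix.diagonal ω - A) *ᵥ (v k)) = μ k • v k := fun k =>
      congrArg toE (hL.mulVec_eigenvectorBasis k)
    have hAw : ∀ l, toE (A *ᵥ (w l)) = lam l • w l := fun l =>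
      congrArg toE (hA.mulVec_eigenvectorBasis l)
    set s : Fin n → ℝ := fun k => if 0 ≤ μ k - c then 1 else -1 with hsdef
    have hs_mul : ∀ k, s k * (μ k - c) = |μ k - c| := by
      intro k
      by_cases h : 0 ≤ μ k - c
      · rw [hsdef]; simp only [if_pos h, one_mul]; rw [abs_of_nonneg h]
      · rw [hsdef]; simp only [if_neg h, neg_one_mul]
        rw [abs_of_neg (lt_of_not_ge h)]
    have hs_abs : ∀ k, |s k| = 1 := by
      intro k
      by_cases h : 0 ≤ μ k - c
      · have : s k = 1 := by
          show (if 0 ≤ μ k - c then (1:ℝ) else -1) = 1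
          rw [if_pos h]
        rw [this]; norm_num
      · have : s k = -1 := by
          show (if 0 ≤ μ k - c then (1:ℝ) else -1) = -1
          rw [if_neg h]
        rw [this]; norm_num
    have hs_le : ∀ k, s k ≤ 1 := fun k => le_of_abs_le (le_of_eq (hs_abs k))
    have hs_ge : ∀ k, -1 ≤ s k := fun k => neg_le_of_abs_le (le_of_eq (hs_abs k))
    have hvnorm : ∀ k, ∑ j, (v k j)^2 = 1 := by
      intro k
      have h := basis_self_inner v k
      rw [inner_eq_sum] at h
      rw [← h]
      exact Finset.sum_congr rfl fun j _ => sq (v k j)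
    -- key expansion of μ k - c
    have hswap : ∀ k, μ k - c
        = (∑ j, (ω j - c) * (v k j)^2) - ∑ l, lam l * ((inner ℝ (w l) (v k) : ℝ))^2 := by
      intro k
      have h1 : (inner ℝ (v k) (toE ((Matrix.diagonal ω - A) *ᵥ (v k))) : ℝ) = μ k := by
        rw [hLv k, real_inner_smul_right, basis_self_inner, mul_one]
      have h2 : toE ((Matrix.diagonal ω - A) *ᵥ (v k))
          = toE (Matrix.diagonal ω *ᵥ (v k)) - toE (A *ᵥ (v k)) := by
        rw [Matrix.sub_mulVec]; rfl
      have h3 : (inner ℝ (v k) (toE (Matrix.diagonal ω *ᵥ (v k))) : ℝ)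
          = ∑ j, ω j * (v k j)^2 := by
        rw [inner_eq_sum]
        simp only [toE_apply]
        refine Finset.sum_congr rfl fun j _ => ?_
        rw [Matrix.mulVec_diagonal]; ring
      have h4 : (inner ℝ (v k) (toE (A *ᵥ (v k))) : ℝ)
          = ∑ l, lam l * ((inner ℝ (w l) (v k) : ℝ))^2 := qf_expand A hA w lam hAw (v k)
      have h5 : μ k = (∑ j, ω j * (v k j)^2) - ∑ l, lam l * ((inner ℝ (w l) (v k) : ℝ))^2 := by
        rw [← h1, h2, inner_sub_right, h3, h4]
      have h6 : c = ∑ j, c * (v k j)^2 := by rw [← Finset.mul_sum, hvnorm k, mul_one]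
      have h7 : (∑ j, ω j * (v k j)^2) - (∑ j, c * (v k j)^2)
          = ∑ j, (ω j - c) * (v k j)^2 := by
        rw [← Finset.sum_sub_distrib]
        exact Finset.sum_congr rfl fun j _ => by ring
      have h8 := h6
      linarith [h5, h7, h6]
    set T : Fin n → ℝ := fun j => ∑ k, s k * (v k j)^2 with hTdef
    set R : Fin n → ℝ := fun l => ∑ k, s k * ((inner ℝ (w l) (v k) : ℝ))^2 with hRdef
    have hmain : ∑ k, |μ k - c| = (∑ j, (ω j - c) * T j) - ∑ l, lam l * R l := by
      calc ∑ k, |μ k - c| = ∑ k, s k * (μ k - c) :=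
            Finset.sum_congr rfl fun k _ => (hs_mul k).symm
        _ = ∑ k, ((∑ j, (ω j - c) * (s k * (v k j)^2))
              - ∑ l, lam l * (s k * ((inner ℝ (w l) (v k) : ℝ))^2)) := by
            refine Finset.sum_congr rfl fun k _ => ?_
            rw [hswap k, mul_sub, Finset.mul_sum, Finset.mul_sum]
            congr 1
            · exact Finset.sum_congr rfl fun j _ => by ring
            · exact Finset.sum_congr rfl fun l _ => by ring
        _ = (∑ j, (ω j - c) * T j) - ∑ l, lam l * R l := by
            rw [Finset.sum_sub_distrib]
            congr 1
            · rw [Finset.sum_comm]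
              exact Finset.sum_congr rfl fun j _ => (Finset.mul_sum _ _ _).symm
            · rw [Finset.sum_comm]
              exact Finset.sum_congr rfl fun l _ => (Finset.mul_sum _ _ _).symm
    have hrow : ∀ j, ∑ k, (v k j)^2 = 1 := fun j => sq_row_sum v j
    have hcoeff : ∀ l, ∑ k, ((inner ℝ (w l) (v k) : ℝ))^2 = 1 := by
      intro l
      have h := sq_coeff_sum' v (w l)
      rw [basis_self_inner] at h
      rw [← h]
      exact Finset.sum_congr rfl fun k _ => by rw [real_inner_comm]
    have hTle : ∀ j, |T j| ≤ 1 := by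
      intro j
      calc |T j| ≤ ∑ k, |s k * (v k j)^2| := Finset.abs_sum_le_sum_abs _ _
        _ = ∑ k, (v k j)^2 := Finset.sum_congr rfl fun k _ => by
            rw [abs_mul, hs_abs k, one_mul, abs_of_nonneg (sq_nonneg _)]
        _ = 1 := hrow j
    have hRle : ∀ l, |R l| ≤ 1 := by
      intro l
      calc |R l| ≤ ∑ k, |s k * ((inner ℝ (w l) (v k) : ℝ))^2| := Finset.abs_sum_le_sum_abs _ _
        _ = ∑ k, ((inner ℝ (w l) (v k) : ℝ))^2 := Finset.sum_congr rfl fun k _ => by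
            rw [abs_mul, hs_abs k, one_mul, abs_of_nonneg (sq_nonneg _)]
        _ = 1 := hcoeff l
    have hpiece1 : ∀ j, (ω j - c) * T j ≤ |ω j - c| := by
      intro j
      calc (ω j - c) * T j ≤ |(ω j - c) * T j| := le_abs_self _
        _ = |ω j - c| * |T j| := abs_mul _ _
        _ ≤ |ω j - c| * 1 := mul_le_mul_of_nonneg_left (hTle j) (abs_nonneg _)
        _ = |ω j - c| := mul_one _
    have hpiece2 : ∀ l, -(lam l * R l) ≤ |lam l| := by
      intro l
      calc -(lam l * R l) ≤ |lam l * R l| := neg_le_abs _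
        _ = |lam l| * |R l| := abs_mul _ _
        _ ≤ |lam l| * 1 := mul_le_mul_of_nonneg_left (hRle l) (abs_nonneg _)
        _ = |lam l| := mul_one _
    -- both slack sums vanish
    have hS1 : ∑ j, (|ω j - c| - (ω j - c) * T j) = 0 := by
      have e1 : ∑ j, (|ω j - c| - (ω j - c) * T j)
          = ∑ j, |ω j - c| - ∑ j, (ω j - c) * T j := Finset.sum_sub_distrib _ _
      have e2 : ∑ l, (|lam l| + lam l * R l)
          = ∑ l, |lam l| + ∑ l, lam l * R l := Finset.sum_add_distrib
      have n1 : 0 ≤ ∑ j, (|ω j - c| - (ω j - c) * T j) :=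
        Finset.sum_nonneg fun j _ => by linarith [hpiece1 j]
      have n2 : 0 ≤ ∑ l, (|lam l| + lam l * R l) :=
        Finset.sum_nonneg fun l _ => by linarith [hpiece2 l]
      linarith [hEq, hmain, e1, e2]
    have hS2 : ∑ l, (|lam l| + lam l * R l) = 0 := by
      have e1 : ∑ j, (|ω j - c| - (ω j - c) * T j)
          = ∑ j, |ω j - c| - ∑ j, (ω j - c) * T j := Finset.sum_sub_distrib _ _
      have e2 : ∑ l, (|lam l| + lam l * R l)
          = ∑ l, |lam l| + ∑ l, lam l * R l := Finset.sum_add_distrib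
      linarith [hEq, hmain, e1, e2, hS1]
    have hslack1 : ∀ j, |ω j - c| = (ω j - c) * T j := by
      intro j
      have := (Finset.sum_eq_zero_iff_of_nonneg (fun j _ => by
        linarith [hpiece1 j] : ∀ j ∈ Finset.univ, 0 ≤ |ω j - c| - (ω j - c) * T j)).mp hS1 j
        (Finset.mem_univ j)
      linarith [this]
    have hslack2 : ∀ l, |lam l| = -(lam l * R l) := by
      intro l
      have := (Finset.sum_eq_zero_iff_of_nonneg (fun l _ => by
        linarith [hpiece2 l] : ∀ l ∈ Finset.univ, 0 ≤ |lam l| + lam l * R l)).mp hS2 l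
        (Finset.mem_univ l)
      linarith [this]
    -- get a vertex of large weight
    have hsd : ∑ j, (ω j - c) = 0 := by
      rw [Finset.sum_sub_distrib, Finset.sum_const, Finset.card_univ, Fintype.card_fin,
        nsmul_eq_mul, hcdef]
      field_simp
      ring
    have hj₀ : ∃ j, 0 < ω j - c := by
      by_contra h
      push_neg at h
      have hall0 : ∀ j ∈ Finset.univ, ω j - c = 0 :=
        (Finset.sum_eq_zero_iff_of_nonpos fun j _ => h j).mp hsd
      have h1 : ω u₀ = c := by have := hall0 u₀ (Finset.mem_univ u₀); linarith
      have h2 : ω v₀ = c := by have := hall0 v₀ (Finset.mem_univ v₀); linarith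
      exact hne0 (h1.trans h2.symm)
    obtain ⟨j₀, hdj₀⟩ := hj₀
    have hT1 : T j₀ = 1 := by
      have h1 := hslack1 j₀
      rw [abs_of_pos hdj₀] at h1
      have := mul_left_cancel₀ (ne_of_gt hdj₀) (h1.symm.trans (mul_one (ω j₀ - c)).symm)
      linarith [this]
    have hv1 : ∀ k, ¬ (0 ≤ μ k - c) → v k j₀ = 0 := by
      intro k hk
      have e0 : ∑ k, (1 - s k) * (v k j₀)^2 = 0 := by
        have : ∑ k, (1 - s k) * (v k j₀)^2 = (∑ k, (v k j₀)^2) - T j₀ := by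
          rw [hTdef]
          rw [← Finset.sum_sub_distrib]
          exact Finset.sum_congr rfl fun k _ => by ring
        rw [this, hrow j₀, hT1]; ring
      have ht := (Finset.sum_eq_zero_iff_of_nonneg (fun k _ =>
        mul_nonneg (by linarith [hs_le k]) (sq_nonneg _))).mp e0 k (Finset.mem_univ k)
      have hsk : s k = -1 := by
        show (if 0 ≤ μ k - c then (1:ℝ) else -1) = -1
        rw [if_neg hk]
      rw [hsk] at ht
      have h2 : (v k j₀)^2 = 0 := by linarith [ht]
      exact pow_eq_zero_iff (by norm_num) |>.mp h2
    -- Perron eigenvector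
    have hedge : ∃ a b, G.Adj a b := by
      have hne' : u₀ ≠ v₀ := fun h => hne0 (by rw [h])
      obtain ⟨p⟩ := hconn.preconnected u₀ v₀
      cases p with
      | nil => exact absurd rfl hne'
      | cons h _ => exact ⟨_, _, h⟩
    obtain ⟨a, b, hab⟩ := hedge
    obtain ⟨ρ, hρ, uu, huupos, hAuu⟩ := perron G hconn hA a b hab
    have hv2 : ∀ l, lam l = ρ → ∀ k, 0 ≤ μ k - c → (inner ℝ (w l) (v k) : ℝ) = 0 := by
      intro l hlρ k hk
      have hlam_pos : 0 < lam l := hlρ ▸ hρ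
      have hRl : R l = -1 := by
        have h1 := hslack2 l
        rw [abs_of_pos hlam_pos] at h1
        have h2 : lam l * (1 + R l) = 0 := by linarith [h1]
        rcases mul_eq_zero.mp h2 with h | h
        · exact absurd h (ne_of_gt hlam_pos)
        · linarith [h]
      have e0 : ∑ k, (1 + s k) * ((inner ℝ (w l) (v k) : ℝ))^2 = 0 := by
        have : ∑ k, (1 + s k) * ((inner ℝ (w l) (v k) : ℝ))^2
            = (∑ k, ((inner ℝ (w l) (v k) : ℝ))^2) + R l := by
          rw [hRdef]
          rw [← Finset.sum_add_distrib]
          exact Finset.sum_congr rfl fun k _ => by ring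
        rw [this, hcoeff l, hRl]; ring
      have ht := (Finset.sum_eq_zero_iff_of_nonneg (fun k _ =>
        mul_nonneg (by linarith [hs_ge k]) (sq_nonneg _))).mp e0 k (Finset.mem_univ k)
      have hsk : s k = 1 := by
        show (if 0 ≤ μ k - c then (1:ℝ) else -1) = 1
        rw [if_pos hk]
      rw [hsk] at ht
      have h2 : ((inner ℝ (w l) (v k) : ℝ))^2 = 0 := by linarith [ht]
      exact pow_eq_zero_iff (by norm_num) |>.mp h2
    have hv3 : ∀ l, lam l ≠ ρ → (inner ℝ (w l) uu : ℝ) = 0 := fun l h =>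
      eig_orth A hA (hAw l) hAuu h
    have hzero : uu j₀ = 0 := by
      calc uu j₀ = (inner ℝ (EuclideanSpace.single j₀ (1:ℝ)) uu : ℝ) := by
            rw [EuclideanSpace.inner_single_left]; simp
        _ = ∑ k, (inner ℝ (EuclideanSpace.single j₀ (1:ℝ)) (v k) : ℝ) * (inner ℝ (v k) uu : ℝ) :=
            (v.sum_inner_mul_inner _ _).symm
        _ = 0 := Finset.sum_eq_zero fun k _ => by
            by_cases hk : 0 ≤ μ k - c
            · have h0 : (inner ℝ (v k) uu : ℝ) = 0 := by
                rw [← w.sum_inner_mul_inner (v k) uu]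
                refine Finset.sum_eq_zero fun l _ => ?_
                by_cases hl : lam l = ρ
                · exact mul_eq_zero_of_left
                    (by rw [real_inner_comm]; exact hv2 l hl k hk) _
                · rw [hv3 l hl, mul_zero]
              rw [h0, mul_zero]
            · rw [EuclideanSpace.inner_single_left, hv1 k hk]
              simp
    exact absurd hzero (ne_of_gt (huupos j₀))
  · -- backward direction
    intro hc
    set cω := ω ⟨0, hn⟩ with hcωdef
    have hall : ∀ j, ω j = cω := fun j => hc j ⟨0, hn⟩
    have hsum : ∑ j, ω j = n * cω := by
      rw [Finset.sum_congr rfl fun j _ => hall j, Finset.sum_const, Finset.card_univ,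
        Fintype.card_fin, nsmul_eq_mul]
    have hcbar : (∑ j, ω j) / n = cω := by rw [hsum]; field_simp
    have hMD : ∑ i, |ω i - (∑ j, ω j) / n| = 0 :=
      Finset.sum_eq_zero fun i _ => by rw [hcbar, hall i, sub_self, abs_zero]
    rw [hMD, hcbar, mul_zero, mul_zero, zero_add]
    -- second eigensystem for L
    have hLw : ∀ l, toE ((Matrix.diagonal ω - G.adjMatrix ℝ) *ᵥ (hA.eigenvectorBasis l))
        = (cω - hA.eigenvalues l) • hA.eigenvectorBasis l := by
      intro l
      have h1 : toE ((Matrix.diagonal ω - G.adjMatrix ℝ) *ᵥ (hA.eigenvectorBasis l))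
          = toE (Matrix.diagonal ω *ᵥ (hA.eigenvectorBasis l))
            - toE (G.adjMatrix ℝ *ᵥ (hA.eigenvectorBasis l)) := by
        rw [Matrix.sub_mulVec]; rfl
      have h2 : toE (Matrix.diagonal ω *ᵥ (hA.eigenvectorBasis l))
          = cω • hA.eigenvectorBasis l := by
        have h3 : (Matrix.diagonal ω *ᵥ (hA.eigenvectorBasis l) : Fin n → ℝ)
            = cω • (hA.eigenvectorBasis l : Fin n → ℝ) := by
          funext i
          rw [Matrix.mulVec_diagonal, hall i]
          rfl
        exact congrArg toE h3
      have hAl : toE (G.adjMatrix ℝ *ᵥ (hA.eigenvectorBasis l))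
          = hA.eigenvalues l • hA.eigenvectorBasis l :=
        congrArg toE (hA.mulVec_eigenvectorBasis l)
      rw [h1, h2, hAl, sub_smul]
    have hpair := pair_sum (Matrix.diagonal ω - G.adjMatrix ℝ) hL
      hL.eigenvectorBasis hA.eigenvectorBasis hL.eigenvalues
      (fun l => cω - hA.eigenvalues l)
      (fun k => congrArg toE (hL.mulVec_eigenvectorBasis k)) hLw
      (fun x => |x - cω|)
    rw [hpair]
    exact Finset.sum_congr rfl fun l _ => by rw [sub_sub_cancel_left, abs_neg]
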